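/- arXiv:2407.09692 — 3 statements merged into one kernel-verified Lean document; each statement's English description precedes it below -/
import Mathlib

section
/- For every Δ ≥ 3, the tree T obtained by taking two vertex-disjoint copies T_1, T_2 of the reduced subdivided star T_Δ* and joining the leaf neighbor of the central vertex of T_1 to the leaf neighbor of the central vertex of T_2 by an edge, which has order n = 4Δ, satisfies γ^IOC(T) = 4Δ − 2 = ((2Δ−1)/(2Δ))·n. -/
/-- `S` is an identifying open code of `G`: a total dominating set that is also a
separating open code. -/
def IsIOC {V : Type*} (G : SimpleGraph V) (S : Set V) : Prop :=
  (∀ v : V, ∃ u ∈ S, G.Adj v u) ∧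
  ∀ u v : V, u ≠ v → G.neighborSet u ∩ S ≠ G.neighborSet v ∩ S

/-- The identifying open code number `γ^IOC(G)`. -/
noncomputable def iocNumber {V : Type*} [Fintype V] (G : SimpleGraph V) : ℕ :=
  sInf {n | ∃ S : Finset V, IsIOC G ↑S ∧ S.card = n}


/-- Two disjoint copies of the reduced subdivided star `T_Δ*` joined by an edge between
the leaf neighbors of the two central vertices. In each copy (indexed by `Bool`),
vertex `0` is the central vertex, vertex `1` is its leaf neighbor `u_j`, and for
`1 ≤ i ≤ Δ - 1` vertex `2*i` is a support vertex with leaf `2*i + 1`. -/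
def doubleReducedStar (Δ : ℕ) : SimpleGraph (Bool × Fin (2 * Δ)) :=
  SimpleGraph.fromRel (fun a b =>
    (a.1 = b.1 ∧ (a.2 : ℕ) = 0 ∧
      ((b.2 : ℕ) = 1 ∨ ∃ i, 1 ≤ i ∧ i ≤ Δ - 1 ∧ (b.2 : ℕ) = 2 * i)) ∨
    (a.1 = b.1 ∧ ∃ i, 1 ≤ i ∧ i ≤ Δ - 1 ∧ (a.2 : ℕ) = 2 * i ∧ (b.2 : ℕ) = 2 * i + 1) ∨
    (a.1 ≠ b.1 ∧ (a.2 : ℕ) = 1 ∧ (b.2 : ℕ) = 1))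

def nbr (k m : ℕ) : Prop :=
  (k = 0 ∧ (m = 1 ∨ (2 ≤ m ∧ m % 2 = 0))) ∨ (2 ≤ k ∧ k % 2 = 0 ∧ m = k + 1)

lemma exA (Δ m : ℕ) (hm : m < 2*Δ) :
    (∃ i, 1 ≤ i ∧ i ≤ Δ-1 ∧ m = 2*i) ↔ (2 ≤ m ∧ m % 2 = 0) :=
  ⟨fun ⟨i,h1,h2,h3⟩ => by omega, fun h => ⟨m/2, by omega, by omega, by omega⟩⟩

lemma exB (Δ k m : ℕ) (hk : k < 2*Δ) :
    (∃ i, 1 ≤ i ∧ i ≤ Δ-1 ∧ k = 2*i ∧ m = 2*i+1) ↔ (2 ≤ k ∧ k % 2 = 0 ∧ m = k+1) :=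
  ⟨fun ⟨i,h1,h2,h3,h4⟩ => by omega, fun h => ⟨k/2, by omega, by omega, by omega⟩⟩

lemma adj_iff' (Δ : ℕ) (p q : Bool) (k m : ℕ) (hk : k < 2*Δ) (hm : m < 2*Δ) :
    (doubleReducedStar Δ).Adj (p, ⟨k, hk⟩) (q, ⟨m, hm⟩) ↔
      ((p = q ∧ (nbr k m ∨ nbr m k)) ∨ (p ≠ q ∧ k = 1 ∧ m = 1)) := by
  simp only [doubleReducedStar, SimpleGraph.fromRel_adj]

  rw [exA Δ m hm, exA Δ k hk, exB Δ k m hk, exB Δ m k hm]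
  cases p <;> cases q <;>
    simp_all [nbr, Prod.ext_iff, Fin.ext_iff] <;> omega

lemma NS1 (Δ : ℕ) (hΔ : 3 ≤ Δ) (p : Bool) :
    (doubleReducedStar Δ).neighborSet (p, ⟨1, by omega⟩) =
      {(p, ⟨0, by omega⟩), (!p, ⟨1, by omega⟩)} := by
  ext ⟨q, m, hm⟩
  simp only [SimpleGraph.mem_neighborSet, Set.mem_insert_iff, Set.mem_singleton_iff,
    Prod.mk.injEq, Fin.mk.injEq]
  rw [adj_iff']
  cases p <;> cases q <;> simp [nbr] <;> omega

lemma NS2 (Δ : ℕ) (hΔ : 3 ≤ Δ) (p : Bool) (k : ℕ) (hk : k + 1 < 2*Δ) (h2 : 2 ≤ k)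
    (he : k % 2 = 0) :
    (doubleReducedStar Δ).neighborSet (p, ⟨k, by omega⟩) =
      {(p, ⟨0, by omega⟩), (p, ⟨k+1, hk⟩)} := by
  ext ⟨q, m, hm⟩
  simp only [SimpleGraph.mem_neighborSet, Set.mem_insert_iff, Set.mem_singleton_iff,
    Prod.mk.injEq, Fin.mk.injEq]
  rw [adj_iff']
  cases p <;> cases q <;> simp [nbr] <;> omega

lemma NS3 (Δ : ℕ) (hΔ : 3 ≤ Δ) (p : Bool) (k : ℕ) (hk : k < 2*Δ) (h3 : 3 ≤ k)
    (ho : k % 2 = 1) :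
    (doubleReducedStar Δ).neighborSet (p, ⟨k, hk⟩) = {(p, ⟨k-1, by omega⟩)} := by
  ext ⟨q, m, hm⟩
  simp only [SimpleGraph.mem_neighborSet, Set.mem_singleton_iff, Prod.mk.injEq, Fin.mk.injEq]
  rw [adj_iff']
  cases p <;> cases q <;> simp [nbr] <;> omega

section lower
variable {Δ : ℕ} (hΔ : 3 ≤ Δ) {S : Finset (Bool × Fin (2*Δ))}
  (hS : IsIOC (doubleReducedStar Δ) ↑S)

-- helper: intersect a pair-set with S when the second elements are not in S
lemma pair_inter {V : Type*} {S : Set V} {a b c : V} (hb : b ∉ S) (hc : c ∉ S) :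
    ({a, b} : Set V) ∩ S = ({a, c} : Set V) ∩ S := by
  ext x
  simp only [Set.mem_inter_iff, Set.mem_insert_iff, Set.mem_singleton_iff]
  constructor
  · rintro ⟨rfl | rfl, hx⟩
    · exact ⟨Or.inl rfl, hx⟩
    · exact absurd hx hb
  · rintro ⟨rfl | rfl, hx⟩
    · exact ⟨Or.inl rfl, hx⟩
    · exact absurd hx hc

include hΔ hS

-- supports are in S
lemma suppMem (p : Bool) (k : ℕ) (hk : k < 2*Δ) (h2 : 2 ≤ k) (he : k % 2 = 0) :
    (p, ⟨k, hk⟩) ∈ S := by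
  obtain ⟨w, hwS, hadj⟩ := hS.1 (p, ⟨k+1, by omega⟩)
  rw [← SimpleGraph.mem_neighborSet,
    NS3 Δ hΔ p (k+1) (by omega) (by omega) (by omega)] at hadj
  rw [Set.mem_singleton_iff] at hadj
  subst hadj
  exact hwS

-- center out & leaf out in same copy: contradiction
lemma pairB (p : Bool) (k : ℕ) (hk : k < 2*Δ) (h3 : 3 ≤ k) (ho : k % 2 = 1)
    (h0 : (p, ⟨0, by omega⟩) ∉ S) (hl : (p, ⟨k, hk⟩) ∉ S) : False := by
  obtain ⟨w, hwS, hadj⟩ := hS.1 (p, ⟨k-1, by omega⟩)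
  rw [← SimpleGraph.mem_neighborSet,
    NS2 Δ hΔ p (k-1) (by omega) (by omega) (by omega)] at hadj
  rcases hadj with h | h
  · subst h; exact h0 hwS
  · rw [Set.mem_singleton_iff] at h
    subst h
    have : (p, (⟨k-1+1, by omega⟩ : Fin (2*Δ))) = (p, (⟨k, hk⟩ : Fin (2*Δ))) := by
      simp [Fin.mk.injEq]; omega
    rw [this] at hwS
    exact hl hwS

-- center out & opposite u out: contradiction
lemma pairC (p : Bool) (h0 : (p, ⟨0, by omega⟩) ∉ S) (hu : (!p, ⟨1, by omega⟩) ∉ S) :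
    False := by
  obtain ⟨w, hwS, hadj⟩ := hS.1 (p, ⟨1, by omega⟩)
  rw [← SimpleGraph.mem_neighborSet, NS1 Δ hΔ p] at hadj
  rcases hadj with h | h
  · subst h; exact h0 hwS
  · rw [Set.mem_singleton_iff] at h; subst h; exact hu hwS

-- two distinct leaves out in same copy: contradiction
lemma pairA (p : Bool) (k m : ℕ) (hk : k < 2*Δ) (hm : m < 2*Δ) (hk3 : 3 ≤ k)
    (hko : k % 2 = 1) (hm3 : 3 ≤ m) (hmo : m % 2 = 1) (hne : k ≠ m)
    (h1 : (p, ⟨k, hk⟩) ∉ S) (h2 : (p, ⟨m, hm⟩) ∉ S) : False := by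
  apply hS.2 (p, ⟨k-1, by omega⟩) (p, ⟨m-1, by omega⟩)
    (by simp [Prod.ext_iff, Fin.ext_iff]; omega)
  rw [NS2 Δ hΔ p (k-1) (by omega) (by omega) (by omega),
      NS2 Δ hΔ p (m-1) (by omega) (by omega) (by omega)]
  have e1 : (p, (⟨k-1+1, by omega⟩ : Fin (2*Δ))) = (p, (⟨k, hk⟩ : Fin (2*Δ))) := by
    simp [Fin.mk.injEq]; omega
  have e2 : (p, (⟨m-1+1, by omega⟩ : Fin (2*Δ))) = (p, (⟨m, hm⟩ : Fin (2*Δ))) := by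
    simp [Fin.mk.injEq]; omega
  rw [e1, e2]
  exact pair_inter h1 h2

-- u out & opposite leaf out: contradiction
lemma pairD (p : Bool) (k : ℕ) (hk : k < 2*Δ) (hk3 : 3 ≤ k) (hko : k % 2 = 1)
    (hu : (p, ⟨1, by omega⟩) ∉ S) (hl : (!p, ⟨k, hk⟩) ∉ S) : False := by
  apply hS.2 (!p, ⟨1, by omega⟩) (!p, ⟨k-1, by omega⟩)
    (by simp [Prod.ext_iff, Fin.ext_iff]; omega)
  rw [NS1 Δ hΔ (!p), NS2 Δ hΔ (!p) (k-1) (by omega) (by omega) (by omega)]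
  have e1 : (p, (⟨1, by omega⟩ : Fin (2*Δ))) = (!(!p), (⟨1, by omega⟩ : Fin (2*Δ))) := by
    simp
  have e2 : (!p, (⟨k-1+1, by omega⟩ : Fin (2*Δ))) = (!p, (⟨k, hk⟩ : Fin (2*Δ))) := by
    simp [Fin.mk.injEq]; omega
  rw [e2, ← e1]
  exact pair_inter hu hl

end lower

section lower2
variable {Δ : ℕ} (hΔ : 3 ≤ Δ) {S : Finset (Bool × Fin (2*Δ))}
  (hS : IsIOC (doubleReducedStar Δ) ↑S)

include hΔ hS

lemma pairAllowed (p q : Bool) (k m : ℕ) (hk : k < 2*Δ) (hm : m < 2*Δ)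
    (hne : (p, (⟨k, hk⟩ : Fin (2*Δ))) ≠ (q, ⟨m, hm⟩))
    (h1 : (p, (⟨k, hk⟩ : Fin (2*Δ))) ∉ S) (h2 : (q, (⟨m, hm⟩ : Fin (2*Δ))) ∉ S) :
    (p = q ∧ ((k=0∧m=1)∨(k=1∧m=0)∨(k=1∧3 ≤ m∧m%2=1)∨(m=1∧3 ≤ k∧k%2=1))) ∨
    (p ≠ q ∧ ((k=0∧m=0)∨(k=1∧m=1)∨(k=0∧3 ≤ m∧m%2=1)∨(m=0∧3 ≤ k∧k%2=1)∨
      (3 ≤ k∧k%2=1∧3 ≤ m∧m%2=1))) := by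
  have ck : k = 0 ∨ k = 1 ∨ (3 ≤ k ∧ k % 2 = 1) ∨ (2 ≤ k ∧ k % 2 = 0) := by omega
  have cm : m = 0 ∨ m = 1 ∨ (3 ≤ m ∧ m % 2 = 1) ∨ (2 ≤ m ∧ m % 2 = 0) := by omega
  rcases ck with rfl | rfl | hkL | hkE
  · rcases cm with rfl | rfl | hmL | hmE
    · by_cases hpq : p = q
      · exact absurd (by rw [hpq]) hne
      · exact Or.inr ⟨hpq, by omega⟩
    · by_cases hpq : p = q
      · exact Or.inl ⟨hpq, by omega⟩
      · have hq : q = !p := by cases p <;> cases q <;> simp_all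
        subst hq
        exact absurd (pairC hΔ hS p h1 h2) id
    · by_cases hpq : p = q
      · subst hpq; exact absurd (pairB hΔ hS p m hm hmL.1 hmL.2 h1 h2) id
      · exact Or.inr ⟨hpq, by omega⟩
    · exact absurd (suppMem hΔ hS q m hm hmE.1 hmE.2) h2
  · rcases cm with rfl | rfl | hmL | hmE
    · by_cases hpq : p = q
      · exact Or.inl ⟨hpq, by omega⟩
      · have hp : p = !q := by cases p <;> cases q <;> simp_all
        subst hp
        exact absurd (pairC hΔ hS q h2 h1) id
    · by_cases hpq : p = q
      · exact absurd (by rw [hpq]) hne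
      · exact Or.inr ⟨hpq, by omega⟩
    · by_cases hpq : p = q
      · exact Or.inl ⟨hpq, by omega⟩
      · have hq : q = !p := by cases p <;> cases q <;> simp_all
        subst hq
        exact absurd (pairD hΔ hS p m hm hmL.1 hmL.2 h1 h2) id
    · exact absurd (suppMem hΔ hS q m hm hmE.1 hmE.2) h2
  · rcases cm with rfl | rfl | hmL | hmE
    · by_cases hpq : p = q
      · subst hpq; exact absurd (pairB hΔ hS p k hk hkL.1 hkL.2 h2 h1) id
      · exact Or.inr ⟨hpq, by omega⟩
    · by_cases hpq : p = q
      · exact Or.inl ⟨hpq, by omega⟩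
      · have hp : p = !q := by cases p <;> cases q <;> simp_all
        subst hp
        exact absurd (pairD hΔ hS q k hk hkL.1 hkL.2 h2 h1) id
    · by_cases hpq : p = q
      · subst hpq
        have hkm : k ≠ m := by
          intro h; exact hne (by simp [Prod.ext_iff, Fin.ext_iff, h])
        exact absurd (pairA hΔ hS p k m hk hm hkL.1 hkL.2 hmL.1 hmL.2 hkm h1 h2) id
      · exact Or.inr ⟨hpq, by omega⟩
    · exact absurd (suppMem hΔ hS q m hm hmE.1 hmE.2) h2
  · exact absurd (suppMem hΔ hS p k hk hkE.1 hkE.2) h1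

lemma tripleLem (p1 p2 p3 : Bool) (k1 k2 k3 : ℕ) (h1 : k1 < 2*Δ) (h2 : k2 < 2*Δ)
    (h3 : k3 < 2*Δ)
    (ne12 : (p1, (⟨k1, h1⟩ : Fin (2*Δ))) ≠ (p2, ⟨k2, h2⟩))
    (ne13 : (p1, (⟨k1, h1⟩ : Fin (2*Δ))) ≠ (p3, ⟨k3, h3⟩))
    (ne23 : (p2, (⟨k2, h2⟩ : Fin (2*Δ))) ≠ (p3, ⟨k3, h3⟩))
    (m1 : (p1, (⟨k1, h1⟩ : Fin (2*Δ))) ∉ S) (m2 : (p2, (⟨k2, h2⟩ : Fin (2*Δ))) ∉ S)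
    (m3 : (p3, (⟨k3, h3⟩ : Fin (2*Δ))) ∉ S) : False := by
  have a12 := pairAllowed hΔ hS p1 p2 k1 k2 h1 h2 ne12 m1 m2
  have a13 := pairAllowed hΔ hS p1 p3 k1 k3 h1 h3 ne13 m1 m3
  have a23 := pairAllowed hΔ hS p2 p3 k2 k3 h2 h3 ne23 m2 m3
  simp only [Prod.mk.injEq, Fin.mk.injEq, ne_eq, not_and] at ne12 ne13 ne23
  cases p1 <;> cases p2 <;> cases p3 <;> simp_all <;> omega

end lower2

lemma cardV (Δ : ℕ) : Fintype.card (Bool × Fin (2 * Δ)) = 4 * Δ := by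
  simp [Fintype.card_prod]; omega

lemma lowerBound {Δ : ℕ} (hΔ : 3 ≤ Δ) {S : Finset (Bool × Fin (2*Δ))}
    (hS : IsIOC (doubleReducedStar Δ) ↑S) : 4 * Δ - 2 ≤ S.card := by
  by_contra hcon
  push_neg at hcon
  have h3 : 3 ≤ Sᶜ.card := by
    rw [Finset.card_compl, cardV Δ]
    omega
  obtain ⟨t, hts, htc⟩ := Finset.exists_subset_card_eq h3
  obtain ⟨a, b, c, hab, hac, hbc, rfl⟩ := Finset.card_eq_three.mp htc
  have ha : a ∉ S := Finset.mem_compl.mp (hts (by simp))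
  have hb : b ∉ S := Finset.mem_compl.mp (hts (by simp))
  have hc : c ∉ S := Finset.mem_compl.mp (hts (by simp))
  obtain ⟨pa, ka, hka⟩ := a
  obtain ⟨pb, kb, hkb⟩ := b
  obtain ⟨pc, kc, hkc⟩ := c
  exact tripleLem hΔ hS pa pb pc ka kb kc hka hkb hkc hab hac hbc ha hb hc

def S0 (Δ : ℕ) : Finset (Bool × Fin (2*Δ)) := Finset.univ.filter (fun v => (v.2 : ℕ) ≠ 3)

lemma S0card (Δ : ℕ) (hΔ : 3 ≤ Δ) : (S0 Δ).card = 4*Δ - 2 := by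
  have key := Finset.card_filter_add_card_filter_not
    (s := (Finset.univ : Finset (Bool × Fin (2*Δ)))) (p := fun v => (v.2 : ℕ) = 3)
  have h2 : (Finset.univ.filter (fun v : Bool × Fin (2*Δ) => (v.2:ℕ) = 3)) =
      {(false, ⟨3, by omega⟩), (true, ⟨3, by omega⟩)} := by
    ext ⟨p, m, hm⟩
    cases p <;> simp [Prod.ext_iff, Fin.ext_iff]
  have h3 : ({(false, (⟨3, by omega⟩ : Fin (2*Δ))), (true, ⟨3, by omega⟩)} :
      Finset (Bool × Fin (2*Δ))).card = 2 := by
    rw [Finset.card_insert_of_notMem (by simp), Finset.card_singleton]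
  rw [h2, h3, Finset.card_univ, cardV Δ] at key
  have : (S0 Δ).card = Finset.card (Finset.univ.filter
      (fun v : Bool × Fin (2*Δ) => ¬((v.2:ℕ) = 3))) := rfl
  omega

lemma S0dom (Δ : ℕ) (hΔ : 3 ≤ Δ) :
    ∀ v, ∃ u ∈ (↑(S0 Δ) : Set (Bool × Fin (2*Δ))), (doubleReducedStar Δ).Adj v u := by
  rintro ⟨p, k, hk⟩
  have ck : k = 0 ∨ k = 1 ∨ (2 ≤ k ∧ k % 2 = 0) ∨ (3 ≤ k ∧ k % 2 = 1) := by omega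
  rcases ck with rfl | rfl | hkE | hkL
  · exact ⟨(p, ⟨1, by omega⟩), by simp [S0], (adj_iff' Δ p p 0 1 _ _).mpr
      (Or.inl ⟨rfl, by unfold nbr; omega⟩)⟩
  · exact ⟨(p, ⟨0, by omega⟩), by simp [S0], (adj_iff' Δ p p 1 0 _ _).mpr
      (Or.inl ⟨rfl, by unfold nbr; omega⟩)⟩
  · exact ⟨(p, ⟨0, by omega⟩), by simp [S0], (adj_iff' Δ p p k 0 _ _).mpr
      (Or.inl ⟨rfl, by unfold nbr; omega⟩)⟩
  · exact ⟨(p, ⟨k-1, by omega⟩), by simp [S0]; omega, (adj_iff' Δ p p k (k-1) _ _).mpr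
      (Or.inl ⟨rfl, by unfold nbr; omega⟩)⟩

lemma memCode (Δ : ℕ) (p d : Bool) (k j : ℕ) (hk : k < 2*Δ) (hj : j < 2*Δ) :
    ((d, (⟨j, hj⟩ : Fin (2*Δ))) ∈
        (doubleReducedStar Δ).neighborSet (p, ⟨k, hk⟩) ∩ ↑(S0 Δ)) ↔
      (j ≠ 3 ∧ ((p = d ∧ (nbr k j ∨ nbr j k)) ∨ (p ≠ d ∧ k = 1 ∧ j = 1))) := by
  simp only [Set.mem_inter_iff, SimpleGraph.mem_neighborSet, adj_iff', S0,
    Finset.coe_filter, Set.mem_setOf_eq, Finset.mem_univ, true_and]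
  tauto

lemma sepCross (Δ k l : ℕ) (hΔ : 3 ≤ Δ) (hk : k < 2*Δ) (hl : l < 2*Δ)
    (C1 : ∀ j, j < 2*Δ → ((j ≠ 3 ∧ (nbr k j ∨ nbr j k)) ↔ (j ≠ 3 ∧ l = 1 ∧ j = 1)))
    (C2 : ∀ j, j < 2*Δ → ((j ≠ 3 ∧ k = 1 ∧ j = 1) ↔ (j ≠ 3 ∧ (nbr l j ∨ nbr j l)))) :
    False := by
  rcases (by omega : k = 0 ∨ k = 1 ∨ (3 ≤ k ∧ k % 2 = 1) ∨ (2 ≤ k ∧ k % 2 = 0))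
    with rfl | rfl | hkc | hkc
  · have a1 := (C1 1 (by omega)).mp ⟨by omega, Or.inl (by unfold nbr; omega)⟩
    exact absurd ((C2 0 (by omega)).mpr
      ⟨by omega, Or.inr (by unfold nbr; omega)⟩) (by omega)
  · exact absurd ((C1 0 (by omega)).mp
      ⟨by omega, Or.inr (by unfold nbr; omega)⟩) (by omega)
  · exact absurd ((C1 (k-1) (by omega)).mp
      ⟨by omega, Or.inr (by unfold nbr; omega)⟩) (by omega)
  · exact absurd ((C1 0 (by omega)).mp
      ⟨by omega, Or.inr (by unfold nbr; omega)⟩) (by omega)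

lemma sepSame (Δ k l : ℕ) (hΔ : 3 ≤ Δ) (hk : k < 2*Δ) (hl : l < 2*Δ) (hne : k ≠ l)
    (Hs : ∀ j, j < 2*Δ → ((j ≠ 3 ∧ (nbr k j ∨ nbr j k)) ↔ (j ≠ 3 ∧ (nbr l j ∨ nbr j l))))
    (Hc : k = 1 ↔ l = 1) : False := by
  rcases (by omega : k = 0 ∨ k = 1 ∨ (3 ≤ k ∧ k % 2 = 1) ∨ (2 ≤ k ∧ k % 2 = 0))
    with rfl | rfl | hkc | hkc
  · -- k = 0 : witness j = 1 is in code of k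
    have h := (Hs 1 (by omega)).mp ⟨by omega, Or.inl (by unfold nbr; omega)⟩
    rcases (by omega : l = 1 ∨ 3 ≤ l ∨ (l = 2)) with rfl | hl3 | rfl
    · exact absurd h (by unfold nbr; omega)
    · exact absurd h (by unfold nbr; omega)
    · exact absurd h (by unfold nbr; omega)
  · -- k = 1
    rcases (by omega : l = 0 ∨ l = 1 ∨ 2 ≤ l) with rfl | rfl | hl2
    · exact absurd ((Hs 1 (by omega)).mpr ⟨by omega, Or.inl (by unfold nbr; omega)⟩)
        (by unfold nbr; omega)
    · exact hne rfl
    · omega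
  · -- k odd ≥ 3
    rcases (by omega : l = 0 ∨ l = 1 ∨ (3 ≤ l ∧ l % 2 = 1) ∨ (2 ≤ l ∧ l % 2 = 0))
      with rfl | rfl | hlc | hlc
    · exact absurd ((Hs 1 (by omega)).mpr ⟨by omega, Or.inl (by unfold nbr; omega)⟩)
        (by unfold nbr; omega)
    · omega
    · have h := (Hs (k-1) (by omega)).mp ⟨by omega, Or.inr (by unfold nbr; omega)⟩
      have := h.2
      unfold nbr at this; omega
    · exact absurd ((Hs 0 (by omega)).mpr ⟨by omega, Or.inr (by unfold nbr; omega)⟩)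
        (by unfold nbr; omega)
  · -- k even ≥ 2
    rcases (by omega : l = 0 ∨ l = 1 ∨ (3 ≤ l ∧ l % 2 = 1) ∨ (2 ≤ l ∧ l % 2 = 0))
      with rfl | rfl | hlc | hlc
    · exact absurd ((Hs 1 (by omega)).mpr ⟨by omega, Or.inl (by unfold nbr; omega)⟩)
        (by unfold nbr; omega)
    · omega
    · exact absurd ((Hs 0 (by omega)).mp ⟨by omega, Or.inr (by unfold nbr; omega)⟩)
        (by unfold nbr; omega)
    · rcases (by omega : k = 2 ∨ 4 ≤ k) with rfl | hk4
      · have h := (Hs (l+1) (by omega)).mpr ⟨by omega, Or.inl (by unfold nbr; omega)⟩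
        have := h.2
        unfold nbr at this; omega
      · have h := (Hs (k+1) (by omega)).mp ⟨by omega, Or.inl (by unfold nbr; omega)⟩
        have := h.2
        unfold nbr at this; omega

lemma S0sep (Δ : ℕ) (hΔ : 3 ≤ Δ) :
    ∀ u v : Bool × Fin (2*Δ), u ≠ v →
      (doubleReducedStar Δ).neighborSet u ∩ ↑(S0 Δ) ≠
      (doubleReducedStar Δ).neighborSet v ∩ ↑(S0 Δ) := by
  rintro ⟨p, k, hk⟩ ⟨q, l, hl⟩ hne heq
  rw [Set.ext_iff] at heq
  have H : ∀ (d : Bool) (j : ℕ), j < 2*Δ →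
      ((j ≠ 3 ∧ ((p = d ∧ (nbr k j ∨ nbr j k)) ∨ (p ≠ d ∧ k = 1 ∧ j = 1))) ↔
      (j ≠ 3 ∧ ((q = d ∧ (nbr l j ∨ nbr j l)) ∨ (q ≠ d ∧ l = 1 ∧ j = 1)))) := by
    intro d j hj
    have := heq (d, ⟨j, hj⟩)
    rwa [memCode, memCode] at this
  clear heq
  simp only [Prod.mk.injEq, Fin.mk.injEq, ne_eq, not_and] at hne
  cases p <;> cases q
  · exact sepSame Δ k l hΔ hk hl (hne rfl)
      (fun j hj => by have := H false j hj; simpa using this)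
      (by have := H true 1 (by omega); simpa using this)
  · exact sepCross Δ k l hΔ hk hl
      (fun j hj => by have := H false j hj; simpa using this)
      (fun j hj => by have := H true j hj; simpa using this)
  · exact sepCross Δ k l hΔ hk hl
      (fun j hj => by have := H true j hj; simpa using this)
      (fun j hj => by have := H false j hj; simpa using this)
  · exact sepSame Δ k l hΔ hk hl (hne rfl)
      (fun j hj => by have := H true j hj; simpa using this)
      (by have := H false 1 (by omega); simpa using this)

theorem stmt14 (Δ : ℕ) (hΔ : 3 ≤ Δ) :
    Fintype.card (Bool × Fin (2 * Δ)) = 4 * Δ ∧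
    iocNumber (doubleReducedStar Δ) = 4 * Δ - 2 := by
  refine ⟨cardV Δ, ?_⟩
  have hIOC : IsIOC (doubleReducedStar Δ) ↑(S0 Δ) := ⟨S0dom Δ hΔ, S0sep Δ hΔ⟩
  have hmem : (4 * Δ - 2) ∈ {n | ∃ S : Finset (Bool × Fin (2*Δ)),
      IsIOC (doubleReducedStar Δ) ↑S ∧ S.card = n} := ⟨S0 Δ, hIOC, S0card Δ hΔ⟩
  apply le_antisymm
  · exact Nat.sInf_le hmem
  · apply le_csInf ⟨_, hmem⟩
    rintro n ⟨S, hS, rfl⟩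
    exact lowerBound hΔ hS
end

section
/- For each p ≥ 3 with p ≠ 4, let G_p be the subcubic graph obtained from a cycle u_1u_2…u_pu_1 by attaching to each cycle vertex u_i a disjoint copy of the reduced subdivided star T_3*, identifying u_i with one of the leaves at distance 2 from its central vertex. Then G_p has order n = 6p, is open twin-free, contains no 4-cycle, and satisfies γ^IOC(G_p) = 5p = (5/6)·n. -/
/-- The graph `G_p`: a cycle on the vertices `(i, 0)`, `i : Fin p`, with a copy of the
reduced subdivided star `T_3*` attached at each cycle vertex. In the copy at `i`,
the vertices `(i,0), (i,1), (i,2), (i,3), (i,4)` form the path `u_i v_i w_i x_i y_i`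
and `(i,5)` is the leaf `z_i` adjacent to `w_i = (i,2)`. -/
def Gp (p : ℕ) : SimpleGraph (Fin p × Fin 6) :=
  SimpleGraph.fromRel (fun a b =>
    (a.2 = 0 ∧ b.2 = 0 ∧ (b.1 : ℕ) = ((a.1 : ℕ) + 1) % p) ∨
    (a.1 = b.1 ∧ ((a.2 = 0 ∧ b.2 = 1) ∨ (a.2 = 1 ∧ b.2 = 2) ∨ (a.2 = 2 ∧ b.2 = 3) ∨
      (a.2 = 3 ∧ b.2 = 4) ∨ (a.2 = 2 ∧ b.2 = 5))))

def TP (x y : ℕ) : Prop :=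
  (x=0∧y=1)∨(y=0∧x=1)∨(x=1∧y=2)∨(y=1∧x=2)∨(x=2∧y=3)∨(y=2∧x=3)∨(x=3∧y=4)∨(y=3∧x=4)∨(x=2∧y=5)∨(y=2∧x=5)

lemma fv2 : ((2:Fin 6):ℕ) = 2 := rfl
lemma fv3 : ((3:Fin 6):ℕ) = 3 := rfl
lemma fv4 : ((4:Fin 6):ℕ) = 4 := rfl
lemma fv5 : ((5:Fin 6):ℕ) = 5 := rfl

lemma mod_succ {p x : ℕ} (hp : 3 ≤ p) (hx : x < p) : (x+1) % p = if x = p-1 then 0 else x+1 := by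
  split
  · next h => subst h; rw [show p-1+1 = p by omega, Nat.mod_self]
  · exact Nat.mod_eq_of_lt (by omega)

set_option maxHeartbeats 1000000 in
lemma gp_adj {p : ℕ} (hp : 3 ≤ p) (a b : Fin p × Fin 6) : (Gp p).Adj a b ↔
    ((a.2.val = 0 ∧ b.2.val = 0 ∧ (b.1.val = a.1.val+1 ∨ a.1.val = b.1.val+1 ∨
        (a.1.val = p-1 ∧ b.1.val = 0) ∨ (b.1.val = p-1 ∧ a.1.val = 0)))
    ∨ (a.1.val = b.1.val ∧ TP a.2.val b.2.val)) := by
  have ha1 := a.1.isLt; have hb1 := b.1.isLt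
  have ha2 := a.2.isLt; have hb2 := b.2.isLt
  simp only [Gp, SimpleGraph.fromRel_adj, TP, Fin.ext_iff, Prod.ext_iff, ne_eq, not_and,
    Fin.val_zero, Fin.val_one, fv2, fv3, fv4, fv5,
    mod_succ hp ha1, mod_succ hp hb1]
  constructor
  · rintro ⟨hne, h | h⟩ <;> rcases h with ⟨h1,h2,h3⟩|⟨h1,h2⟩
    · exact Or.inl ⟨h1, h2, by split_ifs at h3 <;> omega⟩
    · rcases h2 with h|h|h|h|h
      · exact Or.inr ⟨h1, Or.inl h⟩
      · exact Or.inr ⟨h1, Or.inr (Or.inr (Or.inl h))⟩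
      · exact Or.inr ⟨h1, Or.inr (Or.inr (Or.inr (Or.inr (Or.inl h))))⟩
      · exact Or.inr ⟨h1, Or.inr (Or.inr (Or.inr (Or.inr (Or.inr (Or.inr (Or.inl h))))))⟩
      · exact Or.inr ⟨h1, Or.inr (Or.inr (Or.inr (Or.inr (Or.inr (Or.inr (Or.inr (Or.inr (Or.inl h))))))))⟩
    · exact Or.inl ⟨h2, h1, by split_ifs at h3 <;> omega⟩
    · rcases h2 with h|h|h|h|h
      · exact Or.inr ⟨h1.symm, Or.inr (Or.inl h)⟩
      · exact Or.inr ⟨h1.symm, Or.inr (Or.inr (Or.inr (Or.inl h)))⟩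
      · exact Or.inr ⟨h1.symm, Or.inr (Or.inr (Or.inr (Or.inr (Or.inr (Or.inl h)))))⟩
      · exact Or.inr ⟨h1.symm, Or.inr (Or.inr (Or.inr (Or.inr (Or.inr (Or.inr (Or.inr (Or.inl h)))))))⟩
      · exact Or.inr ⟨h1.symm, Or.inr (Or.inr (Or.inr (Or.inr (Or.inr (Or.inr (Or.inr (Or.inr (Or.inr (h)))))))))⟩
  · rintro (⟨h1,h2,h3⟩|⟨h1,h2⟩)
    · refine ⟨by omega, ?_⟩
      rcases h3 with h3|h3|⟨h3,h4⟩|⟨h3,h4⟩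
      · exact Or.inl (Or.inl ⟨h1,h2, by split_ifs <;> omega⟩)
      · exact Or.inr (Or.inl ⟨h2,h1, by split_ifs <;> omega⟩)
      · exact Or.inl (Or.inl ⟨h1,h2, by split_ifs <;> omega⟩)
      · exact Or.inr (Or.inl ⟨h2,h1, by split_ifs <;> omega⟩)
    · refine ⟨by omega, ?_⟩
      rcases h2 with h|h|h|h|h|h|h|h|h|h
      · exact Or.inl (Or.inr ⟨h1, Or.inl h⟩)
      · exact Or.inr (Or.inr ⟨h1.symm, Or.inl h⟩)
      · exact Or.inl (Or.inr ⟨h1, Or.inr (Or.inl h)⟩)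
      · exact Or.inr (Or.inr ⟨h1.symm, Or.inr (Or.inl h)⟩)
      · exact Or.inl (Or.inr ⟨h1, Or.inr (Or.inr (Or.inl h))⟩)
      · exact Or.inr (Or.inr ⟨h1.symm, Or.inr (Or.inr (Or.inl h))⟩)
      · exact Or.inl (Or.inr ⟨h1, Or.inr (Or.inr (Or.inr (Or.inl h)))⟩)
      · exact Or.inr (Or.inr ⟨h1.symm, Or.inr (Or.inr (Or.inr (Or.inl h)))⟩)
      · exact Or.inl (Or.inr ⟨h1, Or.inr (Or.inr (Or.inr (Or.inr h)))⟩)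
      · exact Or.inr (Or.inr ⟨h1.symm, Or.inr (Or.inr (Or.inr (Or.inr h)))⟩)

lemma TP0 {y : ℕ} : TP 0 y ↔ y = 1 := by (simp [TP]; try omega)
lemma TP1 {y : ℕ} : TP 1 y ↔ y = 0 ∨ y = 2 := by (simp [TP]; try omega)
lemma TP2 {y : ℕ} : TP 2 y ↔ y = 1 ∨ y = 3 ∨ y = 5 := by (simp [TP]; try omega)
lemma TP3 {y : ℕ} : TP 3 y ↔ y = 2 ∨ y = 4 := by (simp [TP]; try omega)
lemma TP4 {y : ℕ} : TP 4 y ↔ y = 3 := by (simp [TP]; try omega)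
lemma TP5 {y : ℕ} : TP 5 y ↔ y = 2 := by (simp [TP]; try omega)

lemma nbhd1 {p : ℕ} (hp : 3 ≤ p) (i : Fin p) :
    (Gp p).neighborSet (i,1) = {(i,0),(i,2)} := by
  ext ⟨k,l⟩
  simp only [SimpleGraph.mem_neighborSet, gp_adj hp, Set.mem_insert_iff,
    Set.mem_singleton_iff, Prod.mk.injEq, Fin.ext_iff, Fin.val_zero, Fin.val_one,
    fv2, fv3, fv4, fv5, TP1]
  omega

lemma nbhd2 {p : ℕ} (hp : 3 ≤ p) (i : Fin p) :
    (Gp p).neighborSet (i,2) = {(i,1),(i,3),(i,5)} := by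
  ext ⟨k,l⟩
  simp only [SimpleGraph.mem_neighborSet, gp_adj hp, Set.mem_insert_iff,
    Set.mem_singleton_iff, Prod.mk.injEq, Fin.ext_iff, Fin.val_zero, Fin.val_one,
    fv2, fv3, fv4, fv5, TP2]
  omega

lemma nbhd3 {p : ℕ} (hp : 3 ≤ p) (i : Fin p) :
    (Gp p).neighborSet (i,3) = {(i,2),(i,4)} := by
  ext ⟨k,l⟩
  simp only [SimpleGraph.mem_neighborSet, gp_adj hp, Set.mem_insert_iff,
    Set.mem_singleton_iff, Prod.mk.injEq, Fin.ext_iff, Fin.val_zero, Fin.val_one,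
    fv2, fv3, fv4, fv5, TP3]
  omega

lemma nbhd4 {p : ℕ} (hp : 3 ≤ p) (i : Fin p) :
    (Gp p).neighborSet (i,4) = {(i,3)} := by
  ext ⟨k,l⟩
  simp only [SimpleGraph.mem_neighborSet, gp_adj hp, Set.mem_singleton_iff,
    Prod.mk.injEq, Fin.ext_iff, Fin.val_zero, Fin.val_one, fv2, fv3, fv4, fv5, TP4]
  omega

lemma nbhd5 {p : ℕ} (hp : 3 ≤ p) (i : Fin p) :
    (Gp p).neighborSet (i,5) = {(i,2)} := by
  ext ⟨k,l⟩
  simp only [SimpleGraph.mem_neighborSet, gp_adj hp, Set.mem_singleton_iff,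
    Prod.mk.injEq, Fin.ext_iff, Fin.val_zero, Fin.val_one, fv2, fv3, fv4, fv5, TP5]
  omega

lemma nbhd0_sub {p : ℕ} (hp : 3 ≤ p) (i : Fin p) :
    (Gp p).neighborSet (i,0) ⊆
      {(⟨(i.val+1) % p, Nat.mod_lt _ i.pos⟩, 0),
       (⟨(i.val+p-1) % p, Nat.mod_lt _ i.pos⟩, 0), (i,1)} := by
  rintro ⟨k,l⟩ h
  have hi := i.isLt; have hk := k.isLt
  simp only [SimpleGraph.mem_neighborSet, gp_adj hp, Fin.val_zero, TP0] at h
  simp only [Set.mem_insert_iff, Set.mem_singleton_iff, Prod.mk.injEq, Fin.ext_iff,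
    Fin.val_zero, Fin.val_one]
  rcases h with ⟨h1, h2, h3⟩ | ⟨h1, h2⟩
  · rcases h3 with h3|h3|⟨h3,h4⟩|⟨h3,h4⟩
    · left; refine ⟨?_, h2⟩; rw [Nat.mod_eq_of_lt (by omega)]; omega
    · right; left; refine ⟨?_, h2⟩
      rw [show i.val + p - 1 = k.val + p by omega, Nat.add_mod_right, Nat.mod_eq_of_lt hk]
    · left; refine ⟨?_, h2⟩; rw [show i.val + 1 = p by omega, Nat.mod_self]; omega
    · right; left; refine ⟨?_, h2⟩
      rw [show i.val + p - 1 = p - 1 by omega, Nat.mod_eq_of_lt (by omega)]; omega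
  · right; right; omega

lemma sep_aux {p : ℕ} (hp : 3 ≤ p) (T : Set (Fin p × Fin 6))
    (hT : ∀ (i : Fin p) (m : Fin 6), m ≠ 5 → (i,m) ∈ T) :
    ∀ u v : Fin p × Fin 6, u ≠ v →
      (Gp p).neighborSet u ∩ T ≠ (Gp p).neighborSet v ∩ T := by
  rintro ⟨i,j⟩ ⟨k,l⟩ hne h
  have h' := Set.ext_iff.mp h
  fin_cases j <;> fin_cases l
  · -- case (0,0)
    have hw : ((i, (1:Fin 6)) : Fin p × Fin 6) ∈ T := hT _ _ (by decide)
    have h2 := h' (i, (1:Fin 6))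
    simp [Set.mem_inter_iff, SimpleGraph.mem_neighborSet, gp_adj hp, hw, TP, Fin.val_zero, Fin.val_one, fv2, fv3, fv4, fv5] at h2
    exact hne (by simp [Prod.ext_iff, Fin.ext_iff]; omega)
  · -- case (0,1)
    have hw : ((i, (1:Fin 6)) : Fin p × Fin 6) ∈ T := hT _ _ (by decide)
    have h2 := h' (i, (1:Fin 6))
    simp [Set.mem_inter_iff, SimpleGraph.mem_neighborSet, gp_adj hp, hw, TP, Fin.val_zero, Fin.val_one, fv2, fv3, fv4, fv5] at h2
  · -- case (0,2)
    have hw : ((k, (3:Fin 6)) : Fin p × Fin 6) ∈ T := hT _ _ (by decide)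
    have h2 := h' (k, (3:Fin 6))
    simp [Set.mem_inter_iff, SimpleGraph.mem_neighborSet, gp_adj hp, hw, TP, Fin.val_zero, Fin.val_one, fv2, fv3, fv4, fv5] at h2
  · -- case (0,3)
    have hw : ((k, (4:Fin 6)) : Fin p × Fin 6) ∈ T := hT _ _ (by decide)
    have h2 := h' (k, (4:Fin 6))
    simp [Set.mem_inter_iff, SimpleGraph.mem_neighborSet, gp_adj hp, hw, TP, Fin.val_zero, Fin.val_one, fv2, fv3, fv4, fv5] at h2
  · -- case (0,4)
    have hw : ((k, (3:Fin 6)) : Fin p × Fin 6) ∈ T := hT _ _ (by decide)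
    have h2 := h' (k, (3:Fin 6))
    simp [Set.mem_inter_iff, SimpleGraph.mem_neighborSet, gp_adj hp, hw, TP, Fin.val_zero, Fin.val_one, fv2, fv3, fv4, fv5] at h2
  · -- case (0,5)
    have hw : ((k, (2:Fin 6)) : Fin p × Fin 6) ∈ T := hT _ _ (by decide)
    have h2 := h' (k, (2:Fin 6))
    simp [Set.mem_inter_iff, SimpleGraph.mem_neighborSet, gp_adj hp, hw, TP, Fin.val_zero, Fin.val_one, fv2, fv3, fv4, fv5] at h2
  · -- case (1,0)
    have hw : ((k, (1:Fin 6)) : Fin p × Fin 6) ∈ T := hT _ _ (by decide)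
    have h2 := h' (k, (1:Fin 6))
    simp [Set.mem_inter_iff, SimpleGraph.mem_neighborSet, gp_adj hp, hw, TP, Fin.val_zero, Fin.val_one, fv2, fv3, fv4, fv5] at h2
  · -- case (1,1)
    have hw : ((i, (2:Fin 6)) : Fin p × Fin 6) ∈ T := hT _ _ (by decide)
    have h2 := h' (i, (2:Fin 6))
    simp [Set.mem_inter_iff, SimpleGraph.mem_neighborSet, gp_adj hp, hw, TP, Fin.val_zero, Fin.val_one, fv2, fv3, fv4, fv5] at h2
    exact hne (by simp [Prod.ext_iff, Fin.ext_iff]; omega)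
  · -- case (1,2)
    have hw : ((k, (3:Fin 6)) : Fin p × Fin 6) ∈ T := hT _ _ (by decide)
    have h2 := h' (k, (3:Fin 6))
    simp [Set.mem_inter_iff, SimpleGraph.mem_neighborSet, gp_adj hp, hw, TP, Fin.val_zero, Fin.val_one, fv2, fv3, fv4, fv5] at h2
  · -- case (1,3)
    have hw : ((k, (4:Fin 6)) : Fin p × Fin 6) ∈ T := hT _ _ (by decide)
    have h2 := h' (k, (4:Fin 6))
    simp [Set.mem_inter_iff, SimpleGraph.mem_neighborSet, gp_adj hp, hw, TP, Fin.val_zero, Fin.val_one, fv2, fv3, fv4, fv5] at h2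
  · -- case (1,4)
    have hw : ((k, (3:Fin 6)) : Fin p × Fin 6) ∈ T := hT _ _ (by decide)
    have h2 := h' (k, (3:Fin 6))
    simp [Set.mem_inter_iff, SimpleGraph.mem_neighborSet, gp_adj hp, hw, TP, Fin.val_zero, Fin.val_one, fv2, fv3, fv4, fv5] at h2
  · -- case (1,5)
    have hw : ((i, (0:Fin 6)) : Fin p × Fin 6) ∈ T := hT _ _ (by decide)
    have h2 := h' (i, (0:Fin 6))
    simp [Set.mem_inter_iff, SimpleGraph.mem_neighborSet, gp_adj hp, hw, TP, Fin.val_zero, Fin.val_one, fv2, fv3, fv4, fv5] at h2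
  · -- case (2,0)
    have hw : ((i, (3:Fin 6)) : Fin p × Fin 6) ∈ T := hT _ _ (by decide)
    have h2 := h' (i, (3:Fin 6))
    simp [Set.mem_inter_iff, SimpleGraph.mem_neighborSet, gp_adj hp, hw, TP, Fin.val_zero, Fin.val_one, fv2, fv3, fv4, fv5] at h2
  · -- case (2,1)
    have hw : ((i, (3:Fin 6)) : Fin p × Fin 6) ∈ T := hT _ _ (by decide)
    have h2 := h' (i, (3:Fin 6))
    simp [Set.mem_inter_iff, SimpleGraph.mem_neighborSet, gp_adj hp, hw, TP, Fin.val_zero, Fin.val_one, fv2, fv3, fv4, fv5] at h2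
  · -- case (2,2)
    have hw : ((i, (1:Fin 6)) : Fin p × Fin 6) ∈ T := hT _ _ (by decide)
    have h2 := h' (i, (1:Fin 6))
    simp [Set.mem_inter_iff, SimpleGraph.mem_neighborSet, gp_adj hp, hw, TP, Fin.val_zero, Fin.val_one, fv2, fv3, fv4, fv5] at h2
    exact hne (by simp [Prod.ext_iff, Fin.ext_iff]; omega)
  · -- case (2,3)
    have hw : ((i, (1:Fin 6)) : Fin p × Fin 6) ∈ T := hT _ _ (by decide)
    have h2 := h' (i, (1:Fin 6))
    simp [Set.mem_inter_iff, SimpleGraph.mem_neighborSet, gp_adj hp, hw, TP, Fin.val_zero, Fin.val_one, fv2, fv3, fv4, fv5] at h2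
  · -- case (2,4)
    have hw : ((i, (1:Fin 6)) : Fin p × Fin 6) ∈ T := hT _ _ (by decide)
    have h2 := h' (i, (1:Fin 6))
    simp [Set.mem_inter_iff, SimpleGraph.mem_neighborSet, gp_adj hp, hw, TP, Fin.val_zero, Fin.val_one, fv2, fv3, fv4, fv5] at h2
  · -- case (2,5)
    have hw : ((i, (1:Fin 6)) : Fin p × Fin 6) ∈ T := hT _ _ (by decide)
    have h2 := h' (i, (1:Fin 6))
    simp [Set.mem_inter_iff, SimpleGraph.mem_neighborSet, gp_adj hp, hw, TP, Fin.val_zero, Fin.val_one, fv2, fv3, fv4, fv5] at h2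
  · -- case (3,0)
    have hw : ((i, (4:Fin 6)) : Fin p × Fin 6) ∈ T := hT _ _ (by decide)
    have h2 := h' (i, (4:Fin 6))
    simp [Set.mem_inter_iff, SimpleGraph.mem_neighborSet, gp_adj hp, hw, TP, Fin.val_zero, Fin.val_one, fv2, fv3, fv4, fv5] at h2
  · -- case (3,1)
    have hw : ((i, (4:Fin 6)) : Fin p × Fin 6) ∈ T := hT _ _ (by decide)
    have h2 := h' (i, (4:Fin 6))
    simp [Set.mem_inter_iff, SimpleGraph.mem_neighborSet, gp_adj hp, hw, TP, Fin.val_zero, Fin.val_one, fv2, fv3, fv4, fv5] at h2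
  · -- case (3,2)
    have hw : ((i, (4:Fin 6)) : Fin p × Fin 6) ∈ T := hT _ _ (by decide)
    have h2 := h' (i, (4:Fin 6))
    simp [Set.mem_inter_iff, SimpleGraph.mem_neighborSet, gp_adj hp, hw, TP, Fin.val_zero, Fin.val_one, fv2, fv3, fv4, fv5] at h2
  · -- case (3,3)
    have hw : ((i, (4:Fin 6)) : Fin p × Fin 6) ∈ T := hT _ _ (by decide)
    have h2 := h' (i, (4:Fin 6))
    simp [Set.mem_inter_iff, SimpleGraph.mem_neighborSet, gp_adj hp, hw, TP, Fin.val_zero, Fin.val_one, fv2, fv3, fv4, fv5] at h2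
    exact hne (by simp [Prod.ext_iff, Fin.ext_iff]; omega)
  · -- case (3,4)
    have hw : ((i, (2:Fin 6)) : Fin p × Fin 6) ∈ T := hT _ _ (by decide)
    have h2 := h' (i, (2:Fin 6))
    simp [Set.mem_inter_iff, SimpleGraph.mem_neighborSet, gp_adj hp, hw, TP, Fin.val_zero, Fin.val_one, fv2, fv3, fv4, fv5] at h2
  · -- case (3,5)
    have hw : ((i, (4:Fin 6)) : Fin p × Fin 6) ∈ T := hT _ _ (by decide)
    have h2 := h' (i, (4:Fin 6))
    simp [Set.mem_inter_iff, SimpleGraph.mem_neighborSet, gp_adj hp, hw, TP, Fin.val_zero, Fin.val_one, fv2, fv3, fv4, fv5] at h2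
  · -- case (4,0)
    have hw : ((i, (3:Fin 6)) : Fin p × Fin 6) ∈ T := hT _ _ (by decide)
    have h2 := h' (i, (3:Fin 6))
    simp [Set.mem_inter_iff, SimpleGraph.mem_neighborSet, gp_adj hp, hw, TP, Fin.val_zero, Fin.val_one, fv2, fv3, fv4, fv5] at h2
  · -- case (4,1)
    have hw : ((i, (3:Fin 6)) : Fin p × Fin 6) ∈ T := hT _ _ (by decide)
    have h2 := h' (i, (3:Fin 6))
    simp [Set.mem_inter_iff, SimpleGraph.mem_neighborSet, gp_adj hp, hw, TP, Fin.val_zero, Fin.val_one, fv2, fv3, fv4, fv5] at h2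
  · -- case (4,2)
    have hw : ((k, (1:Fin 6)) : Fin p × Fin 6) ∈ T := hT _ _ (by decide)
    have h2 := h' (k, (1:Fin 6))
    simp [Set.mem_inter_iff, SimpleGraph.mem_neighborSet, gp_adj hp, hw, TP, Fin.val_zero, Fin.val_one, fv2, fv3, fv4, fv5] at h2
  · -- case (4,3)
    have hw : ((k, (2:Fin 6)) : Fin p × Fin 6) ∈ T := hT _ _ (by decide)
    have h2 := h' (k, (2:Fin 6))
    simp [Set.mem_inter_iff, SimpleGraph.mem_neighborSet, gp_adj hp, hw, TP, Fin.val_zero, Fin.val_one, fv2, fv3, fv4, fv5] at h2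
  · -- case (4,4)
    have hw : ((i, (3:Fin 6)) : Fin p × Fin 6) ∈ T := hT _ _ (by decide)
    have h2 := h' (i, (3:Fin 6))
    simp [Set.mem_inter_iff, SimpleGraph.mem_neighborSet, gp_adj hp, hw, TP, Fin.val_zero, Fin.val_one, fv2, fv3, fv4, fv5] at h2
    exact hne (by simp [Prod.ext_iff, Fin.ext_iff]; omega)
  · -- case (4,5)
    have hw : ((i, (3:Fin 6)) : Fin p × Fin 6) ∈ T := hT _ _ (by decide)
    have h2 := h' (i, (3:Fin 6))
    simp [Set.mem_inter_iff, SimpleGraph.mem_neighborSet, gp_adj hp, hw, TP, Fin.val_zero, Fin.val_one, fv2, fv3, fv4, fv5] at h2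
  · -- case (5,0)
    have hw : ((k, (1:Fin 6)) : Fin p × Fin 6) ∈ T := hT _ _ (by decide)
    have h2 := h' (k, (1:Fin 6))
    simp [Set.mem_inter_iff, SimpleGraph.mem_neighborSet, gp_adj hp, hw, TP, Fin.val_zero, Fin.val_one, fv2, fv3, fv4, fv5] at h2
  · -- case (5,1)
    have hw : ((k, (0:Fin 6)) : Fin p × Fin 6) ∈ T := hT _ _ (by decide)
    have h2 := h' (k, (0:Fin 6))
    simp [Set.mem_inter_iff, SimpleGraph.mem_neighborSet, gp_adj hp, hw, TP, Fin.val_zero, Fin.val_one, fv2, fv3, fv4, fv5] at h2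
  · -- case (5,2)
    have hw : ((k, (1:Fin 6)) : Fin p × Fin 6) ∈ T := hT _ _ (by decide)
    have h2 := h' (k, (1:Fin 6))
    simp [Set.mem_inter_iff, SimpleGraph.mem_neighborSet, gp_adj hp, hw, TP, Fin.val_zero, Fin.val_one, fv2, fv3, fv4, fv5] at h2
  · -- case (5,3)
    have hw : ((k, (4:Fin 6)) : Fin p × Fin 6) ∈ T := hT _ _ (by decide)
    have h2 := h' (k, (4:Fin 6))
    simp [Set.mem_inter_iff, SimpleGraph.mem_neighborSet, gp_adj hp, hw, TP, Fin.val_zero, Fin.val_one, fv2, fv3, fv4, fv5] at h2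
  · -- case (5,4)
    have hw : ((k, (3:Fin 6)) : Fin p × Fin 6) ∈ T := hT _ _ (by decide)
    have h2 := h' (k, (3:Fin 6))
    simp [Set.mem_inter_iff, SimpleGraph.mem_neighborSet, gp_adj hp, hw, TP, Fin.val_zero, Fin.val_one, fv2, fv3, fv4, fv5] at h2
  · -- case (5,5)
    have hw : ((i, (2:Fin 6)) : Fin p × Fin 6) ∈ T := hT _ _ (by decide)
    have h2 := h' (i, (2:Fin 6))
    simp [Set.mem_inter_iff, SimpleGraph.mem_neighborSet, gp_adj hp, hw, TP, Fin.val_zero, Fin.val_one, fv2, fv3, fv4, fv5] at h2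
    exact hne (by simp [Prod.ext_iff, Fin.ext_iff]; omega)

instance TP.dec (x y : ℕ) : Decidable (TP x y) := by unfold TP; infer_instance

lemma tree4 : ∀ x y z w : Fin 6, TP x.val y.val → TP y.val z.val → TP z.val w.val →
    TP w.val x.val → (x.val = z.val ∨ y.val = w.val) := by decide

lemma no4 {p : ℕ} (hp : 3 ≤ p) (hp4 : p ≠ 4) (a b c d : Fin p × Fin 6)
    (h1 : (Gp p).Adj a b) (h2 : (Gp p).Adj b c) (h3 : (Gp p).Adj c d)
    (h4 : (Gp p).Adj d a) : a = c ∨ b = d := by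
  rw [gp_adj hp] at h1 h2 h3 h4
  have goal' : (a.1.val = c.1.val ∧ a.2.val = c.2.val) ∨
      (b.1.val = d.1.val ∧ b.2.val = d.2.val) → a = c ∨ b = d := by
    rintro (⟨e1,e2⟩|⟨e1,e2⟩)
    · exact Or.inl (Prod.ext (Fin.ext e1) (Fin.ext e2))
    · exact Or.inr (Prod.ext (Fin.ext e1) (Fin.ext e2))
  apply goal'
  rcases h1 with ⟨a1,a2,a3⟩|⟨a1,a2⟩ <;> rcases h2 with ⟨b1,b2,b3⟩|⟨b1,b2⟩ <;>
    rcases h3 with ⟨c1,c2,c3⟩|⟨c1,c2⟩ <;> rcases h4 with ⟨d1,d2,d3⟩|⟨d1,d2⟩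
  pick_goal 16
  · rcases tree4 a.2 b.2 c.2 d.2 a2 b2 c2 d2 with h|h
    · exact Or.inl ⟨by omega, h⟩
    · exact Or.inr ⟨by omega, h⟩
  all_goals (simp -failIfUnchanged only [TP] at *; omega)

lemma triple_ncard_le {α : Type*} (a b c : α) : ({a,b,c} : Set α).ncard ≤ 3 := by
  have h1 := Set.ncard_insert_le a ({b,c} : Set α)
  have h2 := Set.ncard_insert_le b ({c} : Set α)
  have h3 := Set.ncard_singleton c
  omega

lemma pair_ncard_le {α : Type*} (a b : α) : ({a,b} : Set α).ncard ≤ 3 := by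
  have h2 := Set.ncard_insert_le a ({b} : Set α)
  have h3 := Set.ncard_singleton b
  omega

lemma deg_le {p : ℕ} (hp : 3 ≤ p) (v : Fin p × Fin 6) :
    ((Gp p).neighborSet v).ncard ≤ 3 := by
  obtain ⟨i,j⟩ := v
  fin_cases j
  · exact le_trans (Set.ncard_le_ncard (nbhd0_sub hp i) (Set.toFinite _))
      (triple_ncard_le _ _ _)
  · exact le_trans (le_of_eq (congrArg Set.ncard (nbhd1 hp i))) (pair_ncard_le _ _)
  · exact le_trans (le_of_eq (congrArg Set.ncard (nbhd2 hp i))) (triple_ncard_le _ _ _)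
  · exact le_trans (le_of_eq (congrArg Set.ncard (nbhd3 hp i))) (pair_ncard_le _ _)
  · exact le_trans (le_of_eq (congrArg Set.ncard (nbhd4 hp i))) (by simp)
  · exact le_trans (le_of_eq (congrArg Set.ncard (nbhd5 hp i))) (by simp)

lemma upper_card {p : ℕ} :
    (Finset.univ.filter (fun v : Fin p × Fin 6 => v.2 ≠ 5)).card = 5 * p := by
  have : (Finset.univ.filter (fun v : Fin p × Fin 6 => v.2 ≠ 5)) =
      Finset.univ ×ˢ ({0,1,2,3,4} : Finset (Fin 6)) := by
    ext ⟨i,j⟩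
    simp only [Finset.mem_filter, Finset.mem_univ, true_and, Finset.mem_product]
    revert j; decide
  have h5 : ({0,1,2,3,4} : Finset (Fin 6)).card = 5 := by decide
  rw [this, Finset.card_product, Finset.card_univ, Fintype.card_fin, h5, Nat.mul_comm]

lemma upper_ioc {p : ℕ} (hp : 3 ≤ p) :
    IsIOC (Gp p) ↑(Finset.univ.filter (fun v : Fin p × Fin 6 => v.2 ≠ 5)) := by
  constructor
  · rintro ⟨i,j⟩
    fin_cases j
    · exact ⟨(i,1), by simp, by rw [gp_adj hp]; right; exact ⟨rfl, by simp [TP, Fin.val_zero, Fin.val_one, fv2, fv3, fv4, fv5]⟩⟩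
    · exact ⟨(i,2), by simp, by rw [gp_adj hp]; right; exact ⟨rfl, by simp [TP, Fin.val_zero, Fin.val_one, fv2, fv3, fv4, fv5]⟩⟩
    · exact ⟨(i,1), by simp, by rw [gp_adj hp]; right; exact ⟨rfl, by simp [TP, Fin.val_zero, Fin.val_one, fv2, fv3, fv4, fv5]⟩⟩
    · exact ⟨(i,2), by simp, by rw [gp_adj hp]; right; exact ⟨rfl, by simp [TP, Fin.val_zero, Fin.val_one, fv2, fv3, fv4, fv5]⟩⟩
    · exact ⟨(i,3), by simp, by rw [gp_adj hp]; right; exact ⟨rfl, by simp [TP, Fin.val_zero, Fin.val_one, fv2, fv3, fv4, fv5]⟩⟩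
    · exact ⟨(i,2), by simp, by rw [gp_adj hp]; right; exact ⟨rfl, by simp [TP, Fin.val_zero, Fin.val_one, fv2, fv3, fv4, fv5]⟩⟩
  · exact sep_aux hp _ (by intro i m hm; simp [hm])

lemma lower_bound {p : ℕ} (hp : 3 ≤ p) (S : Finset (Fin p × Fin 6))
    (hS : IsIOC (Gp p) ↑S) : 5 * p ≤ S.card := by
  -- forced memberships
  have hx : ∀ i : Fin p, (i,3) ∈ S := by
    intro i
    obtain ⟨u, huS, hadj⟩ := hS.1 (i,4)
    have hu : u ∈ (Gp p).neighborSet (i,4) := hadj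
    rw [nbhd4 hp] at hu
    rwa [hu] at huS
  have hw : ∀ i : Fin p, (i,2) ∈ S := by
    intro i
    obtain ⟨u, huS, hadj⟩ := hS.1 (i,5)
    have hu : u ∈ (Gp p).neighborSet (i,5) := hadj
    rw [nbhd5 hp] at hu
    rwa [hu] at huS
  have hy : ∀ i : Fin p, (i,4) ∈ S := by
    intro i
    by_contra hy
    apply hS.2 (i,3) (i,5)
      (by simp)
    rw [nbhd3 hp, nbhd5 hp]
    ext w
    simp only [Set.mem_inter_iff, Set.mem_insert_iff, Set.mem_singleton_iff]
    constructor
    · rintro ⟨rfl | rfl, h2⟩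
      · exact ⟨rfl, h2⟩
      · exact absurd h2 hy
    · rintro ⟨rfl, h2⟩
      exact ⟨Or.inl rfl, h2⟩
  have hu : ∀ i : Fin p, (i,0) ∈ S := by
    intro i
    by_contra hu
    apply hS.2 (i,1) (i,5)
      (by simp)
    rw [nbhd1 hp, nbhd5 hp]
    ext w
    simp only [Set.mem_inter_iff, Set.mem_insert_iff, Set.mem_singleton_iff]
    constructor
    · rintro ⟨rfl | rfl, h2⟩
      · exact absurd h2 hu
      · exact ⟨rfl, h2⟩
    · rintro ⟨rfl, h2⟩
      exact ⟨Or.inr rfl, h2⟩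
  have hvz : ∀ i : Fin p, (i,1) ∈ S ∨ (i,5) ∈ S := by
    intro i
    by_contra hc
    push_neg at hc
    obtain ⟨hv, hz⟩ := hc
    apply hS.2 (i,2) (i,4)
      (by simp)
    rw [nbhd2 hp, nbhd4 hp]
    ext w
    simp only [Set.mem_inter_iff, Set.mem_insert_iff, Set.mem_singleton_iff]
    constructor
    · rintro ⟨rfl | rfl | rfl, h2⟩
      · exact absurd h2 hv
      · exact ⟨rfl, h2⟩
      · exact absurd h2 hz
    · rintro ⟨rfl, h2⟩
      exact ⟨Or.inr (Or.inl rfl), h2⟩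
  -- injection from Fin p × Fin 5
  classical
  set f : Fin p × Fin 5 → Fin p × Fin 6 := fun x =>
    (x.1, if (x.1, (1:Fin 6)) ∈ S then ![0,2,3,4,1] x.2 else ![0,2,3,4,5] x.2) with hf
  have hmem : ∀ x : Fin p × Fin 5, x ∈ (Finset.univ : Finset (Fin p × Fin 5)) → f x ∈ S := by
    rintro ⟨i,m⟩ -
    simp only [hf]
    split_ifs with h1
    · fin_cases m <;> simp <;> [exact hu i; exact hw i; exact hx i; exact hy i; exact h1]
    · fin_cases m <;> simp <;>
        [exact hu i; exact hw i; exact hx i; exact hy i; exact (hvz i).resolve_left h1]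
  have hinj : Set.InjOn f ↑(Finset.univ : Finset (Fin p × Fin 5)) := by
    rintro ⟨i,m⟩ - ⟨i',m'⟩ - h
    simp only [hf, Prod.mk.injEq] at h
    obtain ⟨h1, h2⟩ := h
    subst h1
    rw [Prod.mk.injEq]
    refine ⟨rfl, ?_⟩
    split_ifs at h2
    · fin_cases m <;> fin_cases m' <;> simp_all <;> exact absurd h2 (by decide)
    · fin_cases m <;> fin_cases m' <;> simp_all <;> exact absurd h2 (by decide)
  have := Finset.card_le_card_of_injOn f hmem hinj
  simpa [Finset.card_univ, Nat.mul_comm] using this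

theorem stmt15 (p : ℕ) (hp : 3 ≤ p) (hp4 : p ≠ 4) :
    Fintype.card (Fin p × Fin 6) = 6 * p ∧
    (∀ v : Fin p × Fin 6, ((Gp p).neighborSet v).ncard ≤ 3) ∧
    (∀ u v : Fin p × Fin 6, u ≠ v → (Gp p).neighborSet u ≠ (Gp p).neighborSet v) ∧
    (∀ a b c d : Fin p × Fin 6, (Gp p).Adj a b → (Gp p).Adj b c → (Gp p).Adj c d →
      (Gp p).Adj d a → a = c ∨ b = d) ∧
    iocNumber (Gp p) = 5 * p := by
  refine ⟨?_, deg_le hp, ?_, fun a b c d h1 h2 h3 h4 => no4 hp hp4 a b c d h1 h2 h3 h4, ?_⟩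
  · simp [Fintype.card_prod, Fintype.card_fin]; ring
  · intro u v hne h
    exact sep_aux hp Set.univ (fun i m _ => Set.mem_univ _) u v hne
      (by rw [Set.inter_univ, Set.inter_univ]; exact h)
  · have hmem : 5 * p ∈ {n | ∃ S : Finset (Fin p × Fin 6), IsIOC (Gp p) ↑S ∧ S.card = n} :=
      ⟨Finset.univ.filter (fun v => v.2 ≠ 5), upper_ioc hp, upper_card⟩
    refine le_antisymm (Nat.sInf_le hmem) (le_csInf ⟨_, hmem⟩ ?_)
    rintro n ⟨S, hS, rfl⟩
    exact lower_bound hp S hS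
end

section
/- In any tree T with at least 2 vertices, if S is an identifying open code of T, then S contains all support vertices of T, and S omits at most one leaf from each set of leaves adjacent to a common support vertex's neighborhood; in particular, for the subdivided star T_k (k ≥ 2), any IO-code contains all k support vertices and at least k−1 of the k outer leaves. -/
/-- The subdivided star `T_k`: the star `K_{1,k}` with every edge subdivided once.
`none` is the center, `some (i, false)` the support vertices, `some (i, true)` the leaves. -/
def subdividedStar (k : ℕ) : SimpleGraph (Option (Fin k × Bool)) :=
  SimpleGraph.fromRel (fun a b =>
    (a = none ∧ ∃ i, b = some (i, false)) ∨
    (∃ i, a = some (i, false) ∧ b = some (i, true)))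

lemma adj_leaf {k : ℕ} (i : Fin k) (x : Option (Fin k × Bool)) :
    (subdividedStar k).Adj (some (i, true)) x ↔ x = some (i, false) := by
  simp only [subdividedStar, SimpleGraph.fromRel_adj]
  constructor
  · rintro ⟨hne, h⟩
    rcases h with (⟨h, _⟩ | ⟨j, hj, _⟩) | (⟨_, j, hj⟩ | ⟨j, hj1, hj2⟩) <;> simp_all
  · rintro rfl
    exact ⟨by simp, Or.inr (Or.inr ⟨i, rfl, rfl⟩)⟩

lemma adj_supp {k : ℕ} (i : Fin k) (x : Option (Fin k × Bool)) :
    (subdividedStar k).Adj (some (i, false)) x ↔ x = none ∨ x = some (i, true) := by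
  simp only [subdividedStar, SimpleGraph.fromRel_adj]
  constructor
  · rintro ⟨hne, h⟩
    rcases h with (⟨h, _⟩ | ⟨j, hj1, hj2⟩) | (⟨h, _⟩ | ⟨j, hj1, hj2⟩) <;> simp_all
  · rintro (rfl | rfl)
    · exact ⟨by simp, Or.inr (Or.inl ⟨rfl, i, rfl⟩)⟩
    · exact ⟨by simp, Or.inl (Or.inr ⟨i, rfl, rfl⟩)⟩

theorem stmt18 :
    (∀ (V : Type) [Fintype V] (T : SimpleGraph V), T.IsTree → 2 ≤ Fintype.card V →
      ∀ S : Set V, IsIOC T S → ∀ u w : V, T.neighborSet w = {u} → u ∈ S) ∧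
    (∀ k : ℕ, 2 ≤ k → ∀ S : Finset (Option (Fin k × Bool)),
      IsIOC (subdividedStar k) ↑S →
      (∀ i : Fin k, some (i, false) ∈ S) ∧
      k - 1 ≤ (Finset.univ.filter (fun i : Fin k => some (i, true) ∈ S)).card) := by
  constructor
  · intro V _ T _ _ S hS u w hw
    obtain ⟨x, hxS, hxadj⟩ := hS.1 w
    have hx : x ∈ T.neighborSet w := hxadj
    rw [hw, Set.mem_singleton_iff] at hx
    rwa [hx] at hxS
  · intro k hk S hS
    have hsupp : ∀ i : Fin k, some (i, false) ∈ S := by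
      intro i
      obtain ⟨x, hxS, hxadj⟩ := hS.1 (some (i, true))
      rw [adj_leaf] at hxadj
      rwa [hxadj] at hxS
    refine ⟨hsupp, ?_⟩
    have hsep : ∀ i j : Fin k, i ≠ j →
        (some (i, true) : Option (Fin k × Bool)) ∈ S ∨ some (j, true) ∈ S := by
      intro i j hij
      by_contra h
      push_neg at h
      obtain ⟨hi, hj⟩ := h
      apply hS.2 (some (i, false)) (some (j, false)) (by simp [hij])
      ext x
      simp only [Set.mem_inter_iff, SimpleGraph.mem_neighborSet, adj_supp]
      constructor
      · rintro ⟨(rfl | rfl), hxS⟩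
        · exact ⟨Or.inl rfl, hxS⟩
        · exact absurd hxS hi
      · rintro ⟨(rfl | rfl), hxS⟩
        · exact ⟨Or.inl rfl, hxS⟩
        · exact absurd hxS hj
    have hcard1 : (Finset.univ.filter (fun i : Fin k => ¬ some (i, true) ∈ S)).card ≤ 1 := by
      rw [Finset.card_le_one]
      intro i hi j hj
      simp only [Finset.mem_filter] at hi hj
      by_contra hij
      rcases hsep i j hij with h | h
      · exact hi.2 h
      · exact hj.2 h
    have := Finset.card_filter_add_card_filter_not
      (s := (Finset.univ : Finset (Fin k))) (p := fun i => some (i, true) ∈ S)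
    simp only [Finset.card_univ, Fintype.card_fin] at this
    omega
end
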